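/- Let m ≥ 4 be even, h = m/2, n = q^m + 1. For every integer a with q^{h-1} ≤ a ≤ q^h and q ∤ a, a is the coset leader of its q-cyclotomic coset modulo n and |C_a| = 2m. -/

import Mathlib

/-- The q-cyclotomic coset of a modulo n: {a * q^j mod n : j ≥ 0}. -/
def cyclCoset (q n a : ℕ) : Finset ℕ :=
  (Finset.range n).image (fun j => a * q ^ j % n)

/-- a is the coset leader (smallest element) of its q-cyclotomic coset modulo n. -/
def IsCosetLeader (q n a : ℕ) : Prop :=
  ∀ j : ℕ, a ≤ a * q ^ j % n

lemma auxNeg (q m r : ℕ) (hr0 : 0 < r) (hrn : r < q ^ m + 1) :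
    r * q ^ m % (q ^ m + 1) = q ^ m + 1 - r := by
  have h1 : r * q ^ m + (q ^ m + 1) = r * (q ^ m + 1) + (q ^ m + 1 - r) := by
    zify [hrn.le]; ring
  calc r * q ^ m % (q ^ m + 1)
      = (r * q ^ m + (q ^ m + 1)) % (q ^ m + 1) := (Nat.add_mod_right _ _).symm
    _ = (r * (q ^ m + 1) + (q ^ m + 1 - r)) % (q ^ m + 1) := by rw [h1]
    _ = (q ^ m + 1 - r) % (q ^ m + 1) := by rw [Nat.mul_comm, Nat.mul_add_mod]
    _ = q ^ m + 1 - r := Nat.mod_eq_of_lt (by omega)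

lemma hordAux (q h : ℕ) (hq2 : 2 ≤ q) :
    q ^ (4 * h) % (q ^ (2 * h) + 1) = 1 := by
  have h1 : 1 ≤ q ^ (2 * h) := Nat.one_le_pow _ _ (by omega)
  have e : q ^ (4 * h) = (q ^ (2 * h) + 1) * (q ^ (2 * h) - 1) + 1 := by
    zify [h1]; ring
  rw [e, Nat.mul_add_mod, Nat.mod_eq_of_lt (by omega)]

lemma perAux (q h a : ℕ) (hq2 : 2 ≤ q) (j : ℕ) :
    a * q ^ j % (q ^ (2 * h) + 1) = a * q ^ (j % (4 * h)) % (q ^ (2 * h) + 1) := by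
  have hord := hordAux q h hq2
  have h1 : q ^ j = (q ^ (4 * h)) ^ (j / (4 * h)) * q ^ (j % (4 * h)) := by
    rw [← pow_mul, ← pow_add]
    congr 1
    exact (Nat.div_add_mod j (4 * h)).symm ▸ rfl
  have h2 : a * q ^ j = a * q ^ (j % (4 * h)) * (q ^ (4 * h)) ^ (j / (4 * h)) := by
    rw [h1]; ring
  have h3 : 1 % (q ^ (2 * h) + 1) = 1 :=
    Nat.mod_eq_of_lt (by have := Nat.one_le_pow (2 * h) q (by omega); omega)
  rw [h2, Nat.mul_mod, Nat.pow_mod, hord, one_pow, h3, mul_one, Nat.mod_mod_of_dvd _ dvd_rfl]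

lemma boundMid (q h a k : ℕ) (hq2 : 2 ≤ q) (hh : 2 ≤ h) (hqa : ¬ q ∣ a)
    (halo : q ^ (h - 1) < a) (hahi : a < q ^ h) (hk1 : 1 ≤ k) (hk2 : k < 2 * h) :
    a < a * q ^ k % (q ^ (2 * h) + 1) ∧
      a * q ^ k % (q ^ (2 * h) + 1) + a < q ^ (2 * h) + 1 := by
  have hq1 : 1 ≤ q := by omega
  have hXpos : 1 ≤ q ^ h := Nat.one_le_pow _ _ (by omega)
  have h2X : 2 ≤ q ^ h := le_trans hq2 (Nat.le_self_pow (by omega) q)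
  have ha0 : 0 < a := by
    have : 1 ≤ q ^ (h - 1) := Nat.one_le_pow _ _ (by omega)
    omega
  have hqhh : q ^ h * q ^ h = q ^ (2 * h) := by rw [← pow_add]; congr 1; omega
  by_cases hkh : k ≤ h
  · have hkh' : q ^ k ≤ q ^ h := Nat.pow_le_pow_right hq1 hkh
    have hq2k : 2 ≤ q ^ k := le_trans hq2 (Nat.le_self_pow (by omega) q)
    have t1 : a * (q ^ k + 1) ≤ (q ^ h - 1) * (q ^ h + 1) :=
      Nat.mul_le_mul (by omega) (by omega)
    have t2 : (q ^ h - 1) * (q ^ h + 1) + 1 = q ^ h * q ^ h := by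
      zify [hXpos]; ring
    rw [mul_add, mul_one] at t1
    have h2a : a * 2 ≤ a * q ^ k := Nat.mul_le_mul (le_refl a) hq2k
    have hmod : a * q ^ k % (q ^ (2 * h) + 1) = a * q ^ k :=
      Nat.mod_eq_of_lt (by omega)
    omega
  · push_neg at hkh
    set d := 2 * h - k with hd
    have hd1 : 1 ≤ d := by omega
    obtain ⟨A, B, hdiv, hBlt⟩ : ∃ A B, q ^ d * A + B = a ∧ B < q ^ d :=
      ⟨a / q ^ d, a % q ^ d, Nat.div_add_mod a _, Nat.mod_lt _ (Nat.one_le_pow _ _ (by omega))⟩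
    have hB1 : 1 ≤ B := by
      rcases Nat.eq_zero_or_pos B with h0 | h1
      · exact absurd (dvd_trans (dvd_pow_self q (n := d) (by omega)) ⟨A, by omega⟩) hqa
      · exact h1
    have hAle : A ≤ a := by
      have := Nat.le_mul_of_pos_left A (Nat.one_le_pow d q (by omega))
      omega
    have hpow : q ^ d * q ^ k = q ^ (2 * h) := by rw [← pow_add]; congr 1; omega
    have hqk_lb : q ^ h * q ≤ q ^ k := by
      calc q ^ h * q = q ^ (h + 1) := by rw [pow_succ]
        _ ≤ q ^ k := Nat.pow_le_pow_right hq1 (by omega)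
    have hqh2 : q ^ h * 2 ≤ q ^ h * q := Nat.mul_le_mul (le_refl _) hq2
    have hZlb : q ^ h + q ^ h ≤ q ^ k := by omega
    have hPlb : q ^ k ≤ B * q ^ k := Nat.le_mul_of_pos_left _ hB1
    have hPub : B * q ^ k + q ^ k ≤ q ^ (2 * h) := by
      have h1 : (B + 1) * q ^ k ≤ q ^ d * q ^ k := Nat.mul_le_mul (by omega) (le_refl _)
      rw [add_one_mul] at h1
      omega
    have e1 : a * q ^ k + A = A * (q ^ (2 * h) + 1) + B * q ^ k := by
      calc a * q ^ k + A = (q ^ d * A + B) * q ^ k + A := by rw [hdiv]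
        _ = A * (q ^ d * q ^ k) + B * q ^ k + A := by ring
        _ = A * (q ^ (2 * h) + 1) + B * q ^ k := by rw [hpow]; ring
    have hsub : A ≤ B * q ^ k := by omega
    have e1' : a * q ^ k = A * (q ^ (2 * h) + 1) + (B * q ^ k - A) := by
      rw [← Nat.add_sub_assoc hsub]
      exact Nat.eq_sub_of_add_eq e1
    have hltn : B * q ^ k - A < q ^ (2 * h) + 1 := by
      have := Nat.sub_le (B * q ^ k) A
      omega
    have e2 : a * q ^ k % (q ^ (2 * h) + 1) = B * q ^ k - A := by
      rw [e1', mul_comm A, Nat.mul_add_mod, Nat.mod_eq_of_lt hltn]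
    have hmodval : a * q ^ k % (q ^ (2 * h) + 1) + A = B * q ^ k := by
      rw [e2]; exact Nat.sub_add_cancel hsub
    omega

lemma boundAll (q h a : ℕ) (hq2 : 2 ≤ q) (hh : 2 ≤ h) (hqa : ¬ q ∣ a)
    (halo : q ^ (h - 1) < a) (hahi : a < q ^ h) (k : ℕ) (hk1 : 1 ≤ k) (hk2 : k < 4 * h) :
    a < a * q ^ k % (q ^ (2 * h) + 1) := by
  have h2X : 2 ≤ q ^ h := le_trans hq2 (Nat.le_self_pow (by omega) q)
  have hqhh : q ^ h * q ^ h = q ^ (2 * h) := by rw [← pow_add]; congr 1; omega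
  have hXX : q ^ h * 2 ≤ q ^ h * q ^ h := Nat.mul_le_mul (le_refl _) h2X
  have ha0 : 0 < a := by
    have : 1 ≤ q ^ (h - 1) := Nat.one_le_pow _ _ (by omega)
    omega
  have haY : a + a < q ^ (2 * h) + 1 := by omega
  rcases lt_trichotomy k (2 * h) with hk | hk | hk
  · exact (boundMid q h a k hq2 hh hqa halo hahi hk1 hk).1
  · subst hk
    rw [auxNeg q (2 * h) a ha0 (by omega)]
    omega
  · have hk' : k - 2 * h + 2 * h = k := by omega
    have hsplit : a * q ^ k = a * q ^ (k - 2 * h) * q ^ (2 * h) := by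
      rw [mul_assoc, ← pow_add, hk']
    have hmid := boundMid q h a (k - 2 * h) hq2 hh hqa halo hahi (by omega) (by omega)
    have hrlt : a * q ^ (k - 2 * h) % (q ^ (2 * h) + 1) < q ^ (2 * h) + 1 :=
      Nat.mod_lt _ (by omega)
    set r := a * q ^ (k - 2 * h) % (q ^ (2 * h) + 1) with hr
    have hmm : a * q ^ k % (q ^ (2 * h) + 1) = r * q ^ (2 * h) % (q ^ (2 * h) + 1) := by
      rw [hsplit, Nat.mul_mod, Nat.mod_eq_of_lt (show q ^ (2 * h) < q ^ (2 * h) + 1 by omega)]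
    rw [hmm, auxNeg q (2 * h) r (by omega) hrlt]
    omega

theorem stmt_16 (q m : ℕ) (hq : IsPrimePow q) (hm : Even m) (hm4 : 4 ≤ m) (a : ℕ)
    (ha1 : q ^ (m / 2 - 1) ≤ a) (ha2 : a ≤ q ^ (m / 2)) (hqa : ¬ q ∣ a) :
    IsCosetLeader q (q ^ m + 1) a ∧ (cyclCoset q (q ^ m + 1) a).card = 2 * m := by
  have hq2 : 2 ≤ q := hq.two_le
  obtain ⟨h, hh'⟩ := hm
  have hm2 : m = 2 * h := by omega
  have hh : 2 ≤ h := by omega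
  have hdiv2 : m / 2 = h := by omega
  rw [hdiv2] at ha1 ha2
  subst hm2
  have halo : q ^ (h - 1) < a := by
    rcases ha1.lt_or_eq with h' | h'
    · exact h'
    · exact absurd (h' ▸ dvd_pow_self q (n := h - 1) (by omega)) hqa
  have hahi : a < q ^ h := by
    rcases ha2.lt_or_eq with h' | h'
    · exact h'
    · exact absurd (h'.symm ▸ dvd_pow_self q (n := h) (by omega)) hqa
  have key := fun k hk1 hk2 => boundAll q h a hq2 hh hqa halo hahi k hk1 hk2
  have hper := fun j => perAux q h a hq2 j
  have hXY : q ^ h ≤ q ^ (2 * h) := Nat.pow_le_pow_right (by omega) (by omega)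
  have han : a < q ^ (2 * h) + 1 := by omega
  have ha0 : 0 < a := by
    have : 1 ≤ q ^ (h - 1) := Nat.one_le_pow _ _ (by omega)
    omega
  have h4hn : 4 * h ≤ q ^ (2 * h) + 1 := by
    have t1 : 2 * h - 1 < 2 ^ (2 * h - 1) := Nat.lt_two_pow_self
    have t2 : 2 ^ (2 * h) = 2 ^ (2 * h - 1) * 2 := by
      rw [← pow_succ]; congr 1; omega
    have t3 : 2 ^ (2 * h) ≤ q ^ (2 * h) := Nat.pow_le_pow_left hq2 _
    omega
  have l1 : a * q ^ (4 * h) % (q ^ (2 * h) + 1) = a := by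
    rw [Nat.mul_mod, hordAux q h hq2, mul_one, Nat.mod_mod_of_dvd _ dvd_rfl,
      Nat.mod_eq_of_lt han]
  constructor
  · intro j
    rw [hper j]
    rcases Nat.eq_zero_or_pos (j % (4 * h)) with h0 | h0
    · rw [h0, pow_zero, mul_one, Nat.mod_eq_of_lt han]
    · exact (key _ h0 (Nat.mod_lt _ (by omega))).le
  · have hfne : ∀ i j, i < j → j < 4 * h →
        a * q ^ i % (q ^ (2 * h) + 1) ≠ a * q ^ j % (q ^ (2 * h) + 1) := by
      intro i j hij hj heq
      have e1 : a * q ^ (i + (4 * h - i)) % (q ^ (2 * h) + 1)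
          = a * q ^ (j + (4 * h - i)) % (q ^ (2 * h) + 1) := by
        rw [pow_add, ← mul_assoc, pow_add, ← mul_assoc, Nat.mul_mod, heq, ← Nat.mul_mod]
      have e2 : i + (4 * h - i) = 4 * h := by omega
      have e3 : j + (4 * h - i) = (j - i) + 4 * h := by omega
      rw [e2, e3] at e1
      have l2 : a * q ^ ((j - i) + 4 * h) % (q ^ (2 * h) + 1)
          = a * q ^ (j - i) % (q ^ (2 * h) + 1) := by
        rw [hper ((j - i) + 4 * h), Nat.add_mod_right, Nat.mod_eq_of_lt (by omega : j - i < 4 * h)]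
      rw [l1, l2] at e1
      exact (key (j - i) (by omega) (by omega)).ne e1
    have himg : cyclCoset q (q ^ (2 * h) + 1) a
        = (Finset.range (4 * h)).image (fun j => a * q ^ j % (q ^ (2 * h) + 1)) := by
      unfold cyclCoset
      apply Finset.ext
      intro x
      simp only [Finset.mem_image, Finset.mem_range]
      constructor
      · rintro ⟨j, hj, rfl⟩
        exact ⟨j % (4 * h), Nat.mod_lt _ (by omega), (hper j).symm⟩
      · rintro ⟨j, hj, rfl⟩
        exact ⟨j, by omega, rfl⟩
    rw [himg, Finset.card_image_of_injOn, Finset.card_range]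
    · omega
    · intro x hx y hy hxy
      simp only [Finset.coe_range, Set.mem_Iio] at hx hy
      rcases lt_trichotomy x y with hlt | heq | hgt
      · exact absurd hxy (hfne x y hlt hy)
      · exact heq
      · exact absurd hxy.symm (hfne y x hgt hx)
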